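/- For every positive real t, the set of isometry types of finite subspaces X of the real line (with the usual metric) whose minimum nonzero distance is ≥ t is an ideal of finite metric spaces that is not representable: there is no metric space whose finite subspaces realize exactly these isometry types. -/

import Mathlib

/-- A bundled metric space (with carrier a `Type`). -/
structure MS : Type 1 where
  carrier : Type
  [str : MetricSpace carrier]

attribute [instance] MS.str

namespace MS

/-- `X` isometrically embeds into `Y`. -/
def Embeds (X Y : MS) : Prop := ∃ f : X.carrier → Y.carrier, Isometry f

/-- The age of a metric space `M`: (the isometry-closed set of) all finite metric
spaces which isometrically embed into `M`. -/
def age (M : Type*) [MetricSpace M] : Set MS :=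
  {X | Finite X.carrier ∧ ∃ f : X.carrier → M, Isometry f}

/-- An ideal of (isometry types of) finite metric spaces, encoded as an
isometry-closed set of finite metric spaces which is nonempty, downward closed
under isometric embeddability, and up-directed. -/
def IsIdeal (𝒞 : Set MS) : Prop :=
  𝒞.Nonempty ∧ (∀ X ∈ 𝒞, Finite X.carrier) ∧
  (∀ X Y : MS, Finite X.carrier → Embeds X Y → Y ∈ 𝒞 → X ∈ 𝒞) ∧
  (∀ X ∈ 𝒞, ∀ Y ∈ 𝒞, ∃ Z ∈ 𝒞, Embeds X Z ∧ Embeds Y Z)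

/-- `𝒞` is representable: it is the age of some metric space. -/
def Representable (𝒞 : Set MS) : Prop :=
  ∃ (N : Type) (_ : MetricSpace N), age N = 𝒞

end MS

/-- `age_t(ℝ)`: the isometry types of finite subspaces of the real line whose minimum
nonzero distance is at least `t`. -/
def ageTReal (t : ℝ) : Set MS :=
  {X : MS | Finite X.carrier ∧ (∀ x y : X.carrier, x ≠ y → t ≤ dist x y) ∧
    ∃ f : X.carrier → ℝ, Isometry f}

namespace ATRaux

open Set

/-- The two-point subspace `{0, d}` of `ℝ`. -/
noncomputable def pairMS (d : ℝ) : MS := ⟨↥({0, d} : Set ℝ)⟩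

lemma dist_zero_d {d : ℝ} (hd : 0 ≤ d) : dist (0 : ℝ) d = d := by
  rw [Real.dist_eq, abs_sub_comm, sub_zero, abs_of_nonneg hd]

lemma pair_mem {t : ℝ} (ht : 0 < t) {d : ℝ} (hd : t ≤ d) : pairMS d ∈ ageTReal t := by
  have hfin : ({0, d} : Set ℝ).Finite := (Set.finite_singleton d).insert 0
  refine ⟨hfin.to_subtype, ?_, Subtype.val, isometry_subtype_coe⟩
  rintro ⟨x, hx⟩ ⟨y, hy⟩ hxy
  have hne : x ≠ y := fun h => hxy (Subtype.ext h)
  show t ≤ dist x y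
  rcases hx with rfl | rfl <;> rcases hy with rfl | rfl
  · exact absurd rfl hne
  · rw [dist_zero_d (by linarith)]; exact hd
  · rw [dist_comm, dist_zero_d (by linarith)]; exact hd
  · exact absurd rfl hne

lemma subset_mem_age {N : Type} [MetricSpace N] (S : Set N) (hS : S.Finite) :
    (⟨↥S⟩ : MS) ∈ MS.age N :=
  ⟨hS.to_subtype, Subtype.val, isometry_subtype_coe⟩

lemma exists_pair {t : ℝ} (ht : 0 < t) {N : Type} [MetricSpace N]
    (hN : MS.age N = ageTReal t) {d : ℝ} (hd : t ≤ d) : ∃ x y : N, dist x y = d := by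
  have hm : pairMS d ∈ MS.age N := by rw [hN]; exact pair_mem ht hd
  obtain ⟨-, f, hf⟩ := hm
  refine ⟨f ⟨0, Or.inl rfl⟩, f ⟨d, Or.inr rfl⟩, ?_⟩
  exact (hf.dist_eq _ _).trans (dist_zero_d (by linarith))

lemma abs_lt_of_floor_div_eq {t u v : ℝ} (ht : 0 < t) (h : ⌊u / t⌋ = ⌊v / t⌋) :
    |u - v| < t := by
  have h1 : (⌊v / t⌋ : ℝ) ≤ u / t := h ▸ Int.floor_le (u / t)
  have h2 : u / t < ⌊v / t⌋ + 1 := by rw [← h]; exact Int.lt_floor_add_one _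
  have h3 : (⌊v / t⌋ : ℝ) ≤ v / t := Int.floor_le _
  have h4 : v / t < ⌊v / t⌋ + 1 := Int.lt_floor_add_one _
  have hu : u / t * t = u := div_mul_cancel₀ u ht.ne'
  have hv : v / t * t = v := div_mul_cancel₀ v ht.ne'
  have huv : u - v < t := by
    have := mul_lt_mul_of_pos_right (show u / t - v / t < 1 by linarith) ht
    rw [sub_mul, hu, hv, one_mul] at this
    exact this
  have hvu : v - u < t := by
    have := mul_lt_mul_of_pos_right (show v / t - u / t < 1 by linarith) ht
    rw [sub_mul, hu, hv, one_mul] at this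
    exact this
  exact abs_sub_lt_iff.mpr ⟨huv, hvu⟩

lemma ball_finite {t : ℝ} (ht : 0 < t) {N : Type} [MetricSpace N]
    (hN : MS.age N = ageTReal t) (p : N) (r : ℝ) :
    {x : N | dist x p ≤ r}.Finite := by
  by_contra hfin
  obtain ⟨n, hn⟩ := exists_nat_gt (4 * r / t + 2)
  have hfin' : {x : N | dist x p ≤ r}.Infinite := hfin
  obtain ⟨F, hFsub, hFcard⟩ := hfin'.exists_subset_card_eq (n + 1)
  have hage := subset_mem_age (↑F : Set N) F.finite_toSet
  rw [hN] at hage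
  obtain ⟨-, hsep, f, hf⟩ := hage
  obtain ⟨a0, ha0⟩ := Finset.card_pos.mp (by rw [hFcard]; omega)
  set a0' : ↥(↑F : Set N) := ⟨a0, ha0⟩ with ha0'
  set φ : ↥(↑F : Set N) → ℤ := fun a => ⌊f a / t⌋ with hφ
  have hinj : Function.Injective φ := by
    intro a b hab
    by_contra hne
    have h1 : t ≤ dist a b := hsep a b hne
    have h2 : dist (f a) (f b) = dist a b := hf.dist_eq a b
    have h3 : |f a - f b| < t := abs_lt_of_floor_div_eq ht hab
    rw [Real.dist_eq] at h2
    linarith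
  have hball : ∀ a : ↥(↑F : Set N), |f a - f a0'| ≤ 2 * r := by
    intro a
    have h1 : dist (a : N) p ≤ r := hFsub a.2
    have h2 : dist (a0 : N) p ≤ r := hFsub ha0
    have h3 : dist (a : N) (a0 : N) ≤ dist (a : N) p + dist p (a0 : N) := dist_triangle _ _ _
    have h4 : |f a - f a0'| = dist (a : N) (a0 : N) := by
      rw [← Real.dist_eq, hf.dist_eq, Subtype.dist_eq]
    rw [dist_comm p] at h3
    rw [h4]
    linarith
  set lo : ℤ := ⌊(f a0' - 2 * r) / t⌋ with hlo
  set hi : ℤ := ⌊(f a0' + 2 * r) / t⌋ with hhi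
  have hmem : ∀ a : ↥(↑F : Set N), φ a ∈ Finset.Icc lo hi := by
    intro a
    have h := hball a
    rw [abs_le] at h
    rw [Finset.mem_Icc]
    constructor
    · exact Int.floor_le_floor (by apply div_le_div_of_nonneg_right ?_ ht.le; linarith)
    · exact Int.floor_le_floor (by apply div_le_div_of_nonneg_right ?_ ht.le; linarith)
  have hcard : (Finset.univ : Finset ↥(↑F : Set N)).card ≤ (Finset.Icc lo hi).card :=
    Finset.card_le_card_of_injOn φ (fun a _ => hmem a) hinj.injOn
  have hcard2 : n + 1 ≤ (Finset.Icc lo hi).card := by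
    have : (Finset.univ : Finset ↥(↑F : Set N)).card = n + 1 := by
      rw [Finset.card_univ]
      rw [show Fintype.card ↥(↑F : Set N) = F.card from Fintype.card_coe F]
      exact hFcard
    omega
  rw [Int.card_Icc] at hcard2
  have hZ : ((n : ℤ) + 1) ≤ hi + 1 - lo := by omega
  have hR : ((n : ℝ) + 1) ≤ (hi : ℝ) + 1 - (lo : ℝ) := by exact_mod_cast hZ
  have hhiR : (hi : ℝ) ≤ (f a0' + 2 * r) / t := Int.floor_le _
  have hloR : (f a0' - 2 * r) / t < (lo : ℝ) + 1 := Int.lt_floor_add_one _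
  have he : (f a0' + 2 * r) / t - (f a0' - 2 * r) / t = 4 * r / t := by
    rw [← sub_div]; congr 1; ring
  linarith

lemma countable_of_age {t : ℝ} (ht : 0 < t) {N : Type} [MetricSpace N]
    (hN : MS.age N = ageTReal t) : Countable N := by
  obtain ⟨p, -, -⟩ := exists_pair ht hN le_rfl
  have hsub : (Set.univ : Set N) ⊆ ⋃ n : ℕ, {z : N | dist z p ≤ n} := by
    intro z _
    obtain ⟨n, hn⟩ := exists_nat_ge (dist z p)
    exact Set.mem_iUnion.mpr ⟨n, hn⟩
  have hcnt : (Set.univ : Set N).Countable :=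
    Set.Countable.mono hsub (Set.countable_iUnion fun n => (ball_finite ht hN p n).countable)
  exact Set.countable_univ_iff.mp hcnt

lemma not_representable {t : ℝ} (ht : 0 < t) : ¬ MS.Representable (ageTReal t) := by
  rintro ⟨N, instN, hN⟩
  have hc : Countable N := countable_of_age ht hN
  have hIci : (Set.Ici t).Countable := by
    have hsub : Set.Ici t ⊆ Set.range (fun q : N × N => dist q.1 q.2) := by
      intro d hd
      obtain ⟨x, y, hxy⟩ := exists_pair ht hN (Set.mem_Ici.mp hd)
      exact ⟨(x, y), hxy⟩
    exact Set.Countable.mono hsub (Set.countable_range _)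
  have hIcc : (Set.Icc t (t + 1)).Countable :=
    hIci.mono (Set.Icc_subset_Ici_self)
  have h1 : (Cardinal.mk ↥(Set.Icc t (t + 1))) ≤ Cardinal.aleph0 :=
    hIcc.le_aleph0
  rw [Cardinal.mk_Icc_real (by linarith : t < t + 1)] at h1
  exact absurd h1 (not_le.mpr Cardinal.aleph0_lt_continuum)

end ATRaux

/-- For every positive real `t`, the set of isometry types of finite subspaces of the
real line with minimum nonzero distance ≥ t is an ideal of finite metric spaces which
is not representable as the age of any metric space. -/
theorem ageTReal_isIdeal_not_representable (t : ℝ) (ht : 0 < t) :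
    MS.IsIdeal (ageTReal t) ∧ ¬ MS.Representable (ageTReal t) := by
  refine ⟨⟨⟨ATRaux.pairMS t, ATRaux.pair_mem ht le_rfl⟩, fun X hX => hX.1, ?_, ?_⟩,
    ATRaux.not_representable ht⟩
  · -- downward closed
    rintro X Y hXfin ⟨f, hf⟩ ⟨hYfin, hYsep, g, hg⟩
    refine ⟨hXfin, ?_, g ∘ f, hg.comp hf⟩
    intro x y hxy
    have : f x ≠ f y := fun h => hxy (hf.injective h)
    calc t ≤ dist (f x) (f y) := hYsep _ _ this
      _ = dist x y := hf.dist_eq x y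
  · -- up-directed
    rintro X ⟨hXfin, hXsep, f, hf⟩ Y ⟨hYfin, hYsep, g, hg⟩
    haveI := hXfin
    haveI := hYfin
    have hA : (Set.range f).Finite := Set.finite_range f
    have hB : (Set.range g).Finite := Set.finite_range g
    set c : ℝ := sSup (Set.range f) + t - sInf (Set.range g) with hc
    have key : ∀ x : X.carrier, ∀ y : Y.carrier, f x + t ≤ g y + c := by
      intro x y
      have h1 : f x ≤ sSup (Set.range f) := le_csSup hA.bddAbove ⟨x, rfl⟩
      have h2 : sInf (Set.range g) ≤ g y := csInf_le hB.bddBelow ⟨y, rfl⟩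
      rw [hc]; linarith
    set S : Set ℝ := Set.range f ∪ (fun x => x + c) '' Set.range g with hS
    have hSfin : S.Finite := hA.union (hB.image _)
    refine ⟨⟨↥S⟩, ⟨hSfin.to_subtype, ?_, Subtype.val, isometry_subtype_coe⟩,
      ⟨fun x => ⟨f x, Or.inl ⟨x, rfl⟩⟩, Isometry.of_dist_eq fun x y => by
        rw [Subtype.dist_eq]; exact hf.dist_eq x y⟩,
      ⟨fun y => ⟨g y + c, Or.inr ⟨g y, ⟨y, rfl⟩, rfl⟩⟩, Isometry.of_dist_eq fun x y => by
        rw [Subtype.dist_eq]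
        show dist (g x + c) (g y + c) = dist x y
        rw [dist_add_right]; exact hg.dist_eq x y⟩⟩
    rintro ⟨z, hz⟩ ⟨w, hw⟩ hne
    have hzw : z ≠ w := fun h => hne (Subtype.ext h)
    rw [Subtype.dist_eq]
    rcases hz with ⟨x, rfl⟩ | ⟨-, ⟨x, rfl⟩, rfl⟩ <;>
      rcases hw with ⟨y, rfl⟩ | ⟨-, ⟨y, rfl⟩, rfl⟩
    · rw [show dist (f x) (f y) = dist x y from hf.dist_eq x y]
      exact hXsep x y (fun h => hzw (by rw [h]))
    · calc t ≤ (g y + c) - f x := by linarith [key x y]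
        _ ≤ |(g y + c) - f x| := le_abs_self _
        _ = dist (f x) (g y + c) := by rw [Real.dist_eq, abs_sub_comm]
    · calc t ≤ (g x + c) - f y := by linarith [key y x]
        _ ≤ |(g x + c) - f y| := le_abs_self _
        _ = dist (g x + c) (f y) := by rw [Real.dist_eq]
    · rw [show dist (g x + c) (g y + c) = dist x y by rw [dist_add_right]; exact hg.dist_eq x y]
      exact hYsep x y (fun h => hzw (by rw [h]))
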